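/- Let n ≥ p ≥ 1 and let Y, Y' ∈ ℝ^{n×p} both have orthonormal columns, with YᵀY' invertible. Then there exist a matrix Z ∈ ℝ^{n×p} with ZᵀY = 0, all of whose singular values are strictly less than π/2, and a thin SVD Z = U Θ Vᵀ, such that the column space of Y V cos(Θ) + U sin(Θ) equals the column space of Y'. -/

import Mathlib

open Matrix

/-- matrix form of the inclusion `U_ω ⊆ Exp_ω(V_ω)`.
Let `Y, Y' ∈ ℝ^{n×p}` have orthonormal columns with `YᵀY'` invertible. Then
there exist a horizontal matrix `Z` (`ZᵀY = 0`) all of whose singular values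
are strictly less than `π/2`, and a thin SVD `Z = UΘVᵀ`, such that the column
space of `Y V cos Θ + U sin Θ` equals the column space of `Y'`. -/
theorem log_domain_in_exp_image
    (n p : ℕ) (hp : 0 < p) (hpn : p ≤ n)
    (Y Y' : Matrix (Fin n) (Fin p) ℝ)
    (hY : Yᵀ * Y = 1) (hY' : Y'ᵀ * Y' = 1)
    (hinv : IsUnit (Yᵀ * Y')) :
    ∃ (Z U : Matrix (Fin n) (Fin p) ℝ) (V : Matrix (Fin p) (Fin p) ℝ)
      (θ : Fin p → ℝ),
      Zᵀ * Y = 0 ∧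
      Uᵀ * U = 1 ∧ Vᵀ * V = 1 ∧
      (∀ i, 0 ≤ θ i) ∧ (∀ i, θ i < Real.pi / 2) ∧
      Z = U * Matrix.diagonal θ * Vᵀ ∧
      LinearMap.range
          (Y * V * Matrix.diagonal (fun i => Real.cos (θ i)) +
            U * Matrix.diagonal (fun i => Real.sin (θ i))).mulVecLin =
        LinearMap.range Y'.mulVecLin := by
  classical
  set M : Matrix (Fin p) (Fin p) ℝ := Yᵀ * Y' with hMdef
  have hMd : IsUnit M.det := (Matrix.isUnit_iff_isUnit_det M).mp hinv
  set B : Matrix (Fin n) (Fin p) ℝ := Y' * M⁻¹ - Y with hBdef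
  have hBY : Bᵀ * Y = 0 := by
    have h1 : Y'ᵀ * Y = Mᵀ := by rw [hMdef, transpose_mul, transpose_transpose]
    rw [hBdef, transpose_sub, transpose_mul, Matrix.sub_mul, Matrix.mul_assoc, h1, hY,
      ← transpose_mul, Matrix.mul_nonsing_inv M hMd, transpose_one, sub_self]
  -- spectral decomposition of BᵀB
  have hPSD : (Bᵀ * B).PosSemidef := by
    have := Matrix.posSemidef_conjTranspose_mul_self B
    rwa [conjTranspose_eq_transpose_of_trivial] at this
  have hA : (Bᵀ * B).IsHermitian := hPSD.1
  set μ : Fin p → ℝ := hA.eigenvalues with hμdef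
  have hμ0 : ∀ i, 0 ≤ μ i := fun i => hPSD.eigenvalues_nonneg i
  set V : Matrix (Fin p) (Fin p) ℝ := (hA.eigenvectorUnitary : Matrix (Fin p) (Fin p) ℝ)
    with hVdef
  have hspec : Bᵀ * B = V * diagonal μ * Vᵀ := by
    have := hA.spectral_theorem
    simpa [hVdef, star_eq_conjTranspose, conjTranspose_eq_transpose_of_trivial, Function.comp] using this
  have hVV : Vᵀ * V = 1 := by
    have := Matrix.mem_unitaryGroup_iff'.mp hA.eigenvectorUnitary.2
    rwa [star_eq_conjTranspose, conjTranspose_eq_transpose_of_trivial] at this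
  have hVV' : V * Vᵀ = 1 := by
    have := Matrix.mem_unitaryGroup_iff.mp hA.eigenvectorUnitary.2
    rwa [star_eq_conjTranspose, conjTranspose_eq_transpose_of_trivial] at this
  set σ : Fin p → ℝ := fun i => Real.sqrt (μ i) with hσdef
  have hσ0 : ∀ i, 0 ≤ σ i := fun i => Real.sqrt_nonneg _
  have hσsq : ∀ i, σ i ^ 2 = μ i := fun i => Real.sq_sqrt (hμ0 i)
  set θ : Fin p → ℝ := fun i => Real.arctan (σ i) with hθdef
  have hθ0 : ∀ i, 0 ≤ θ i := fun i => by rw [hθdef, ← Real.arctan_zero]; exact Real.arctan_strictMono.monotone (hσ0 i)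
  have hθlt : ∀ i, θ i < Real.pi / 2 := fun i => Real.arctan_lt_pi_div_two _
  set C : Matrix (Fin n) (Fin p) ℝ := B * V with hCdef
  have hCC : Cᵀ * C = diagonal μ := by
    rw [hCdef, transpose_mul, Matrix.mul_assoc, ← Matrix.mul_assoc Bᵀ, hspec]
    simp only [Matrix.mul_assoc, hVV, Matrix.mul_one]
    rw [← Matrix.mul_assoc, hVV, Matrix.one_mul]
  have hCY : Cᵀ * Y = 0 := by
    rw [hCdef, transpose_mul, Matrix.mul_assoc, hBY, Matrix.mul_zero]
  -- entries of CᵀC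
  have hCdot : ∀ j j', (∑ i, C i j * C i j') = if j = j' then μ j else 0 := by
    intro j j'
    have := congrFun (congrFun hCC j) j'
    simpa [Matrix.mul_apply, Matrix.diagonal_apply, transpose_apply] using this
  -- build U via orthonormal basis extension
  set w : Fin p → EuclideanSpace ℝ (Fin n) :=
    fun j => (WithLp.equiv 2 _).symm (fun i => C i j) with hwdef
  have hwinner : ∀ j j', (inner ℝ (w j) (w j') : ℝ) = if j = j' then μ j else 0 := by
    intro j j'
    rw [real_inner_comm, ← hCdot j j']
    simp [hwdef, PiLp.inner_apply, RCLike.inner_apply, conj_trivial]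
  set v : Fin n → EuclideanSpace ℝ (Fin n) :=
    fun k => if h : (k : ℕ) < p then (σ ⟨k, h⟩)⁻¹ • w ⟨k, h⟩ else 0 with hvdef
  set s : Set (Fin n) := {k | ∃ h : (k : ℕ) < p, μ ⟨k, h⟩ ≠ 0} with hsdef
  have hμσ : ∀ j, μ j ≠ 0 → 0 < σ j := by
    intro j hj
    exact Real.sqrt_pos.mpr (lt_of_le_of_ne (hμ0 j) (Ne.symm hj))
  have horth : Orthonormal ℝ (s.restrict v) := by
    rw [orthonormal_iff_ite]
    rintro ⟨k, hk, hkμ⟩ ⟨k', hk', hk'μ⟩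
    simp only [Set.restrict_apply, Set.restrict, hvdef, dif_pos hk, dif_pos hk']
    rw [real_inner_smul_left, real_inner_smul_right, hwinner]
    by_cases h : k = k'
    · subst h
      rw [show (⟨(k : ℕ), hk'⟩ : Fin p) = ⟨(k : ℕ), hk⟩ from rfl]
      rw [if_pos rfl, if_pos (Subtype.ext rfl)]
      have hne := (hμσ ⟨(k : ℕ), hk⟩ hkμ).ne'
      rw [← hσsq ⟨(k : ℕ), hk⟩, pow_two]
      field_simp
    · have h1 : (⟨(k : ℕ), hk⟩ : Fin p) ≠ ⟨(k' : ℕ), hk'⟩ := by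
        intro hc
        apply h
        have hval : (k : ℕ) = (k' : ℕ) := congrArg (Fin.val : Fin p → ℕ) hc
        exact Fin.ext hval
      have h2 : (⟨k, hk, hkμ⟩ : s) ≠ ⟨k', hk', hk'μ⟩ := by
        intro hc; exact h (congrArg Subtype.val hc)
      rw [if_neg h1, if_neg h2]; ring
  have hcard : Module.finrank ℝ (EuclideanSpace ℝ (Fin n)) = Fintype.card (Fin n) := by
    simp [finrank_euclideanSpace]
  obtain ⟨b, hb⟩ := horth.exists_orthonormalBasis_extension_of_card_eq hcard
  set U : Matrix (Fin n) (Fin p) ℝ :=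
    Matrix.of (fun i j => b (Fin.castLE hpn j) i) with hUdef
  have hUU : Uᵀ * U = 1 := by
    ext j j'
    have := (orthonormal_iff_ite.mp b.orthonormal) (Fin.castLE hpn j) (Fin.castLE hpn j')
    rw [real_inner_comm] at this
    simp only [PiLp.inner_apply, RCLike.inner_apply, conj_trivial] at this
    simp only [Matrix.mul_apply, transpose_apply, hUdef, Matrix.of_apply, Matrix.one_apply]
    rw [this]
    congr 1
    simp [Fin.castLE_injective hpn |>.eq_iff]
  -- columns with μ j = 0 are zero columns of C
  have hCzero : ∀ j, μ j = 0 → ∀ i, C i j = 0 := by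
    intro j hj i
    have h0 : (∑ i, C i j * C i j) = 0 := by rw [hCdot]; simp [hj]
    have := Finset.sum_eq_zero_iff_of_nonneg (fun i _ => mul_self_nonneg (C i j)) |>.mp h0
    have := this i (Finset.mem_univ i)
    exact mul_self_eq_zero.mp this
  have hUcol : ∀ j, μ j ≠ 0 → ∀ i, U i j = (σ j)⁻¹ * C i j := by
    intro j hj i
    have hjlt : ((Fin.castLE hpn j : Fin n) : ℕ) < p := by simp [j.isLt]
    have hmem : (Fin.castLE hpn j : Fin n) ∈ s := ⟨hjlt, by simpa using hj⟩
    have hbj := hb _ hmem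
    rw [hUdef]
    show b (Fin.castLE hpn j) i = _
    rw [hbj, hvdef]
    simp only [dif_pos hjlt]
    have hjj : (⟨((Fin.castLE hpn j : Fin n) : ℕ), hjlt⟩ : Fin p) = j := by
      ext; simp
    rw [hjj]
    simp [hwdef]
  have hUσ : U * diagonal σ = C := by
    ext i j
    rw [Matrix.mul_diagonal]
    by_cases hj : μ j = 0
    · have : σ j = 0 := by rw [hσdef]; simp [hj]
      rw [this, mul_zero, hCzero j hj i]
    · rw [hUcol j hj i, mul_comm ((σ j)⁻¹), mul_assoc,
        inv_mul_cancel₀ (ne_of_gt (hμσ j hj)), mul_one]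
  -- Z
  set Z : Matrix (Fin n) (Fin p) ℝ := U * diagonal θ * Vᵀ with hZdef
  set d : Fin p → ℝ := fun i => if μ i = 0 then 0 else θ i / σ i with hddef
  have hθeq : θ = fun i => d i * σ i := by
    funext i
    rw [hddef]
    by_cases hi : μ i = 0
    · have hσi : σ i = 0 := by rw [hσdef]; simp [hi]
      simp [hi, hσi, hθdef, Real.arctan_zero]
    · simp only [if_neg hi]
      rw [div_mul_cancel₀ _ (ne_of_gt (hμσ i hi))]
  have hθfac : diagonal θ = diagonal d * diagonal σ := by
    rw [diagonal_mul_diagonal, ← hθeq]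
  have hZY : Zᵀ * Y = 0 := by
    have hdiagUT : diagonal σ * Uᵀ = Cᵀ := by
      rw [← hUσ, transpose_mul, diagonal_transpose]
    rw [hZdef, transpose_mul, transpose_mul, transpose_transpose, diagonal_transpose,
      hθfac]
    calc V * (diagonal d * diagonal σ * Uᵀ) * Y
        = V * (diagonal d * (diagonal σ * Uᵀ)) * Y := by rw [Matrix.mul_assoc (diagonal d)]
      _ = V * (diagonal d * Cᵀ) * Y := by rw [hdiagUT]
      _ = V * (diagonal d * (Cᵀ * Y)) := by rw [Matrix.mul_assoc, Matrix.mul_assoc]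
      _ = 0 := by rw [hCY, Matrix.mul_zero, Matrix.mul_zero]
  -- main identity
  have hsincos : ∀ i, σ i * Real.cos (θ i) = Real.sin (θ i) := by
    intro i
    rw [hθdef]
    simp only [Real.cos_arctan, Real.sin_arctan]
    rw [mul_one_div]
  have hUsin : U * diagonal (fun i => Real.sin (θ i)) =
      C * diagonal (fun i => Real.cos (θ i)) := by
    rw [← hUσ, Matrix.mul_assoc, diagonal_mul_diagonal,
      show (fun i => σ i * Real.cos (θ i)) = fun i => Real.sin (θ i) from
        funext fun i => hsincos i]
  have hYB : Y + B = Y' * M⁻¹ := by rw [hBdef]; abel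
  have hW : Y * V * diagonal (fun i => Real.cos (θ i)) +
      U * diagonal (fun i => Real.sin (θ i)) =
      Y' * (M⁻¹ * (V * diagonal (fun i => Real.cos (θ i)))) := by
    rw [hUsin, hCdef]
    rw [show Y * V * diagonal (fun i => Real.cos (θ i)) +
        B * V * diagonal (fun i => Real.cos (θ i)) =
        (Y + B) * V * diagonal (fun i => Real.cos (θ i)) from by rw [Matrix.add_mul, Matrix.add_mul]]
    rw [hYB]
    simp only [Matrix.mul_assoc]
  -- invertibility of the right factor
  have hcospos : ∀ i, 0 < Real.cos (θ i) := by
    intro i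
    apply Real.cos_pos_of_mem_Ioo
    constructor
    · linarith [hθ0 i, Real.pi_pos]
    · exact hθlt i
  have hVdet : IsUnit V.det := by
    apply IsUnit.of_mul_eq_one (Vᵀ.det)
    rw [← det_mul, hVV', det_one]
  have hDdet : IsUnit (diagonal (fun i => Real.cos (θ i))).det := by
    rw [det_diagonal]
    exact isUnit_iff_ne_zero.mpr (ne_of_gt (Finset.prod_pos fun i _ => hcospos i))
  set R : Matrix (Fin p) (Fin p) ℝ := M⁻¹ * (V * diagonal (fun i => Real.cos (θ i)))
    with hRdef
  have hRdet : IsUnit R.det := by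
    rw [hRdef, det_mul, det_mul]
    exact (Matrix.isUnit_nonsing_inv_det M hMd).mul (hVdet.mul hDdet)
  have hRsurj : Function.Surjective R.mulVecLin := by
    intro y
    refine ⟨R⁻¹ *ᵥ y, ?_⟩
    rw [mulVecLin_apply, mulVec_mulVec, Matrix.mul_nonsing_inv _ hRdet, one_mulVec]
  refine ⟨Z, U, V, θ, hZY, hUU, hVV, hθ0, hθlt, rfl, ?_⟩
  rw [hW, Matrix.mulVecLin_mul]
  exact LinearMap.range_comp_of_range_eq_top _ (LinearMap.range_eq_top.mpr hRsurj)
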